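/- Let P be an irreducible, transient, semi-isotropic transition matrix on the homogeneous tree T_q with Martin kernel K. If (y_n) is a sequence in V_q with up(o,y_n) → ∞ (i.e. y_n converges to the distinguished end ω) such that K(x,y_n) → h(x) pointwise for all x ∈ V_q, then h depends only on the horocycle index: there is a function f : ℤ → [0,∞) with h(x) = f(hor(x)) for all x ∈ V_q, and f is superharmonic for the projected walk on ℤ, i.e. ∑_n μ̃(n) f(m+n) ≤ f(m) for all m ∈ ℤ. -/

import Mathlib

open Filter Topology ENNReal

/-! ### Generic Markov chain notions -/

/-- `p` is a transition matrix: nonnegative entries, rows summing to `1`. -/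
def IsTransMat {X : Type*} (p : X → X → ℝ) : Prop :=
  (∀ x y, 0 ≤ p x y) ∧ ∀ x, HasSum (fun y => p x y) 1

open Classical in
/-- `n`-step transition probabilities. -/
noncomputable def pstep {X : Type*} (p : X → X → ℝ) : ℕ → X → X → ℝ
  | 0, x, y => if x = y then 1 else 0
  | n + 1, x, y => ∑' z, pstep p n x z * p z y

/-- Irreducibility: any state can be reached from any state. -/
def IsIrredMat {X : Type*} (p : X → X → ℝ) : Prop :=
  ∀ x y, ∃ n : ℕ, 0 < pstep p n x y

/-- Green kernel, valued in `[0,∞]`. -/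
noncomputable def Green {X : Type*} (p : X → X → ℝ) (x y : X) : ℝ≥0∞ :=
  ∑' n : ℕ, ENNReal.ofReal (pstep p n x y)

/-- Transience: the Green kernel is everywhere finite. -/
def IsTransient {X : Type*} (p : X → X → ℝ) : Prop :=
  ∀ x y, Green p x y ≠ ⊤

/-- Martin kernel with respect to a root `o`. -/
noncomputable def Martin {X : Type*} (p : X → X → ℝ) (o x y : X) : ℝ :=
  (Green p x y).toReal / (Green p o y).toReal

/-- Harmonic function: `∑_y p(x,y) h(y)` converges (absolutely) to `h(x)` for all `x`. -/
def IsHarmonic {X : Type*} (p : X → X → ℝ) (h : X → ℝ) : Prop :=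
  ∀ x, HasSum (fun y => p x y * h y) (h x)

/-- Minimal positive harmonic function, normalized at the root `o`. -/
def IsMinimalHarmonic {X : Type*} (p : X → X → ℝ) (o : X) (h : X → ℝ) : Prop :=
  IsHarmonic p h ∧ (∀ x, 0 < h x) ∧ h o = 1 ∧
    ∀ h₁ : X → ℝ, IsHarmonic p h₁ → (∀ x, 0 < h₁ x) → (∀ x, h₁ x ≤ h x) →
      ∃ c : ℝ, ∀ x, h₁ x = c * h x

/-! ### The homogeneous tree `T_q` -/

/-- Finitely supported configurations `ℕ → ℤ/qℤ`. -/
def Conf (q : ℕ) : Type := {σ : ℕ → ZMod q // (Function.support σ).Finite}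

/-- Vertex set of the homogeneous tree `T_q`: `Σ_q × ℤ`. -/
def V (q : ℕ) : Type := Conf q × ℤ

/-- Horocycle index of a vertex. -/
def hor {q : ℕ} (x : V q) : ℤ := x.2

/-- The confluent level `k̄` of two vertices. -/
noncomputable def kbar {q : ℕ} (x y : V q) : ℤ :=
  sSup {ℓ : ℤ | ℓ ≤ min x.2 y.2 ∧
    ∀ m : ℕ, x.1.1 ((x.2 - ℓ).toNat + m) = y.1.1 ((y.2 - ℓ).toNat + m)}

/-- `up(x,y) = hor(x) - k̄(x,y)`. -/
noncomputable def up {q : ℕ} (x y : V q) : ℤ := x.2 - kbar x y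

/-- Graph distance on the tree: `d(x,y) = up(x,y) + up(y,x)`. -/
noncomputable def tdist {q : ℕ} (x y : V q) : ℤ := up x y + up y x

/-- The zero configuration. -/
def zeroConf (q : ℕ) : Conf q :=
  ⟨fun _ => 0, Set.Finite.subset (Set.finite_empty) (by simp [Function.support])⟩

/-- Root vertex `o = (0,0)` of the tree. -/
def troot (q : ℕ) : V q := (zeroConf q, 0)

/-- Semi-isotropic transition matrix on the tree: `p(x,y)` depends only on
`(up(x,y), up(y,x))`. -/
def SemiIsoTree {q : ℕ} (p : V q → V q → ℝ) : Prop :=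
  ∀ x y x' y' : V q, up x y = up x' y' → up y x = up y' x' → p x y = p x' y'

/-- The boundary `∂*T_q`: two-sided sequences vanishing at all sufficiently
small indices. -/
def Bdry (q : ℕ) : Type := {ξ : ℤ → ZMod q // ∃ N : ℤ, ∀ n ≤ N, ξ n = 0}

/-- The confluent level `k̄(x,ξ)` of a vertex and a boundary point. -/
noncomputable def kbarB {q : ℕ} (x : V q) (ξ : Bdry q) : ℤ :=
  sSup {ℓ : ℤ | ℓ ≤ x.2 ∧ ∀ n : ℤ, n ≤ ℓ → x.1.1 ((x.2 - n).toNat) = ξ.1 n}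

/-- `up(x,ξ) = hor(x) - k̄(x,ξ)`. -/
noncomputable def upB {q : ℕ} (x : V q) (ξ : Bdry q) : ℤ := x.2 - kbarB x ξ

/-- A sequence of vertices converges to the boundary point `ξ ∈ ∂*T_q`. -/
def TendsToBdry {q : ℕ} (y : ℕ → V q) (ξ : Bdry q) : Prop :=
  Tendsto (fun n => kbarB (y n) ξ) atTop atTop

/-- A sequence of vertices converges to the distinguished end `ω`. -/
def TendsToOmega {q : ℕ} (y : ℕ → V q) : Prop :=
  Tendsto (fun n => up (troot q) (y n)) atTop atTop

open Classical in
/-- The projected measure `μ̃` on `ℤ`: `μ̃(n) = ∑_{y : hor(y) = n} p(o,y)`. -/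
noncomputable def muTilde {q : ℕ} (p : V q → V q → ℝ) (n : ℤ) : ℝ :=
  ∑' y : V q, if hor y = n then p (troot q) y else 0


section Markov

open Classical

variable {X : Type*} {p : X → X → ℝ}

lemma p_le_one (hp : IsTransMat p) (x y : X) : p x y ≤ 1 :=
  le_hasSum (hp.2 x) y (fun z _ => hp.1 x z)

lemma pstep_nonneg (hp : IsTransMat p) : ∀ (n : ℕ) (x y : X), 0 ≤ pstep p n x y
  | 0, x, y => by unfold pstep; positivity
  | n + 1, x, y => by
      unfold pstep
      exact tsum_nonneg fun z => mul_nonneg (pstep_nonneg hp n x z) (hp.1 z y)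

lemma ofReal_p_sum (hp : IsTransMat p) (x : X) : ∑' y, ENNReal.ofReal (p x y) = 1 := by
  rw [← ENNReal.ofReal_tsum_of_nonneg (hp.1 x) (hp.2 x).summable, (hp.2 x).tsum_eq,
    ENNReal.ofReal_one]

lemma pstep_summable_and (hp : IsTransMat p) : ∀ (n : ℕ) (x : X),
    Summable (fun y => pstep p n x y) ∧ ∑' y, ENNReal.ofReal (pstep p n x y) = 1
  | 0, x => by
    constructor
    · apply summable_of_finite_support
      refine (Set.finite_singleton x).subset ?_
      intro y hy
      simp only [Function.mem_support] at hy
      unfold pstep at hy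
      by_cases h : x = y
      · exact h ▸ rfl
      · simp [h] at hy
    · rw [show (fun y => ENNReal.ofReal (pstep p 0 x y)) =
          fun y => if y = x then (1:ℝ≥0∞) else 0 by
            funext y; unfold pstep
            by_cases h : x = y
            · subst h; simp
            · rw [if_neg h, if_neg (fun hh => h hh.symm)]; simp]
      exact tsum_ite_eq x 1
  | n + 1, x => by
    obtain ⟨hs, he⟩ := pstep_summable_and hp n x
    have hsum_z : ∀ y, Summable (fun z => pstep p n x z * p z y) := fun y =>
      Summable.of_nonneg_of_le (fun z => mul_nonneg (pstep_nonneg hp n x z) (hp.1 z y))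
        (fun z => mul_le_of_le_one_right (pstep_nonneg hp n x z) (p_le_one hp z y)) hs
    have key : ∀ y, ENNReal.ofReal (pstep p (n+1) x y)
        = ∑' z, ENNReal.ofReal (pstep p n x z) * ENNReal.ofReal (p z y) := by
      intro y
      show ENNReal.ofReal (∑' z, pstep p n x z * p z y) = _
      rw [ENNReal.ofReal_tsum_of_nonneg
        (fun z => mul_nonneg (pstep_nonneg hp n x z) (hp.1 z y)) (hsum_z y)]
      congr 1; funext z
      exact ENNReal.ofReal_mul (pstep_nonneg hp n x z)
    have hone : ∑' y, ENNReal.ofReal (pstep p (n+1) x y) = 1 := by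
      simp_rw [key]
      rw [ENNReal.tsum_comm]
      calc ∑' z, ∑' y, ENNReal.ofReal (pstep p n x z) * ENNReal.ofReal (p z y)
          = ∑' z, ENNReal.ofReal (pstep p n x z) * ∑' y, ENNReal.ofReal (p z y) := by
            congr 1; funext z; rw [ENNReal.tsum_mul_left]
        _ = ∑' z, ENNReal.ofReal (pstep p n x z) := by
            congr 1; funext z; rw [ofReal_p_sum hp, mul_one]
        _ = 1 := he
    refine ⟨?_, hone⟩
    have hfin : ∑' y, ENNReal.ofReal (pstep p (n+1) x y) ≠ ⊤ := by
      rw [hone]; exact one_ne_top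
    have := ENNReal.summable_toReal hfin
    refine this.congr fun y => ?_
    rw [ENNReal.toReal_ofReal (pstep_nonneg hp (n+1) x y)]

lemma pstep_ofReal_succ (hp : IsTransMat p) (n : ℕ) (x y : X) :
    ENNReal.ofReal (pstep p (n+1) x y)
      = ∑' z, ENNReal.ofReal (pstep p n x z) * ENNReal.ofReal (p z y) := by
  obtain ⟨hs, _⟩ := pstep_summable_and hp n x
  have hsum_z : Summable (fun z => pstep p n x z * p z y) :=
    Summable.of_nonneg_of_le (fun z => mul_nonneg (pstep_nonneg hp n x z) (hp.1 z y))
      (fun z => mul_le_of_le_one_right (pstep_nonneg hp n x z) (p_le_one hp z y)) hs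
  show ENNReal.ofReal (∑' z, pstep p n x z * p z y) = _
  rw [ENNReal.ofReal_tsum_of_nonneg
    (fun z => mul_nonneg (pstep_nonneg hp n x z) (hp.1 z y)) hsum_z]
  congr 1; funext z
  exact ENNReal.ofReal_mul (pstep_nonneg hp n x z)

lemma pstep_ofReal_zero (x y : X) :
    ENNReal.ofReal (pstep p 0 x y) = if x = y then (1:ℝ≥0∞) else 0 := by
  unfold pstep; by_cases h : x = y <;> simp [h]

/-- first-step recursion -/
lemma pstep_first_step (hp : IsTransMat p) : ∀ (n : ℕ) (x y : X),
    ENNReal.ofReal (pstep p (n+1) x y)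
      = ∑' z, ENNReal.ofReal (p x z) * ENNReal.ofReal (pstep p n z y)
  | 0, x, y => by
    rw [pstep_ofReal_succ hp]
    simp_rw [pstep_ofReal_zero]
    rw [tsum_eq_single x (by intro z hz; simp [Ne.symm hz]),
      tsum_eq_single y (by intro z hz; simp [hz])]
    simp
  | n + 1, x, y => by
    rw [pstep_ofReal_succ hp]
    have : ∀ z : X, ENNReal.ofReal (pstep p (n+1) x z)
        = ∑' w, ENNReal.ofReal (p x w) * ENNReal.ofReal (pstep p n w z) :=
      fun z => pstep_first_step hp n x z
    simp_rw [this]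
    rw [show ∑' (z : X), (∑' (w : X), ENNReal.ofReal (p x w) *
          ENNReal.ofReal (pstep p n w z)) * ENNReal.ofReal (p z y)
        = ∑' (z : X) (w : X), ENNReal.ofReal (p x w) *
          ENNReal.ofReal (pstep p n w z) * ENNReal.ofReal (p z y) by
      congr 1; funext z; rw [ENNReal.tsum_mul_right]]
    rw [ENNReal.tsum_comm]
    congr 1; funext w
    rw [pstep_ofReal_succ hp, ← ENNReal.tsum_mul_left]
    congr 1; funext z
    ring

set_option maxHeartbeats 1000000 in
/-- Green kernel identity -/
lemma green_identity (hp : IsTransMat p) (x w : X) :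
    Green p x w = (if x = w then (1:ℝ≥0∞) else 0)
      + ∑' z, ENNReal.ofReal (p x z) * Green p z w := by
  have h0 : Green p x w = ENNReal.ofReal (pstep p 0 x w)
      + ∑' n : ℕ, ENNReal.ofReal (pstep p (n+1) x w) := by
    unfold Green
    exact tsum_eq_zero_add' ENNReal.summable
  rw [h0, pstep_ofReal_zero]
  congr 1
  simp_rw [pstep_first_step hp]
  rw [ENNReal.tsum_comm]
  congr 1; funext z
  unfold Green
  rw [ENNReal.tsum_mul_left]

/-- invariance of pstep and Green under p-preserving bijections -/
lemma pstep_inv (g : X ≃ X) (hg : ∀ a b, p (g a) (g b) = p a b) :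
    ∀ (n : ℕ) (a b : X), pstep p n (g a) (g b) = pstep p n a b
  | 0, a, b => by
    unfold pstep
    by_cases h : a = b <;> simp [h, g.apply_eq_iff_eq]
  | n + 1, a, b => by
    unfold pstep
    rw [← g.tsum_eq (fun z => pstep p n (g a) z * p z (g b))]
    exact tsum_congr fun z => by rw [pstep_inv g hg n a z, hg z b]

lemma green_inv (g : X ≃ X) (hg : ∀ a b, p (g a) (g b) = p a b) (a b : X) :
    Green p (g a) (g b) = Green p a b := by
  unfold Green
  exact tsum_congr fun n => by rw [pstep_inv g hg n a b]

end Markov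
section Tree
variable {q : ℕ}

/-- The digit of `x` at level `n` (zero above the vertex level). -/
noncomputable def dig (x : V q) (n : ℤ) : ZMod q :=
  if n ≤ x.2 then x.1.1 ((x.2 - n).toNat) else 0

lemma dig_of_gt {x : V q} {n : ℤ} (h : x.2 < n) : dig x n = 0 := by
  unfold dig; rw [if_neg (by omega)]

lemma dig_apply (x : V q) (j : ℕ) : dig x (x.2 - j) = x.1.1 j := by
  have h : (x.2 - (x.2 - (j:ℤ))).toNat = j := by omega
  unfold dig
  rw [if_pos (by omega), h]

lemma dig_troot (n : ℤ) : dig (troot q) n = 0 := by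
  unfold dig troot zeroConf
  split <;> rfl

/-- Eventually-zero bound for digits. -/
lemma exists_dig_bound (x : V q) : ∃ c : ℤ, c ≤ x.2 ∧ c ≤ 0 ∧ ∀ n ≤ c, dig x n = 0 := by
  obtain ⟨N, hN⟩ := (x.1.2.subset (subset_refl _)).bddAbove
  refine ⟨min (x.2 - (N + 1)) 0, by omega, by omega, fun n hn => ?_⟩
  unfold dig
  rw [if_pos (by omega)]
  by_contra hne
  have : ((x.2 - n).toNat : ℕ) ∈ Function.support x.1.1 := hne
  have := hN this
  have this : (x.2 - n).toNat ≤ N := this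
  omega

/-- Two vertices with the same level and digits agree. -/
lemma vertex_ext {x y : V q} (h2 : x.2 = y.2) (hd : ∀ n, dig x n = dig y n) : x = y := by
  obtain ⟨⟨σ, hσ⟩, k⟩ := x
  obtain ⟨⟨τ, hτ⟩, l⟩ := y
  cases h2
  refine Prod.ext (Subtype.ext (funext fun j => ?_)) rfl
  have := hd (k - j)
  rwa [dig_apply ⟨⟨σ, hσ⟩, k⟩ j, dig_apply ⟨⟨τ, hτ⟩, k⟩ j] at this

/-- The defining set of `kbar`, rewritten via digits. -/
lemma kbar_set_eq (x y : V q) :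
    {ℓ : ℤ | ℓ ≤ min x.2 y.2 ∧
      ∀ m : ℕ, x.1.1 ((x.2 - ℓ).toNat + m) = y.1.1 ((y.2 - ℓ).toNat + m)}
    = {ℓ : ℤ | ℓ ≤ min x.2 y.2 ∧ ∀ n ≤ ℓ, dig x n = dig y n} := by
  ext ℓ
  simp only [Set.mem_setOf_eq, and_congr_right_iff]
  intro hℓ
  constructor
  · intro H n hn
    have := H ((ℓ - n).toNat)
    unfold dig
    rw [if_pos (by omega), if_pos (by omega)]
    convert this using 2 <;> omega
  · intro H m
    have := H (ℓ - m) (by omega)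
    unfold dig at this
    rw [if_pos (by omega), if_pos (by omega)] at this
    convert this using 2 <;> omega

lemma kbar_set_nonempty (x y : V q) :
    {ℓ : ℤ | ℓ ≤ min x.2 y.2 ∧ ∀ n ≤ ℓ, dig x n = dig y n}.Nonempty := by
  obtain ⟨c, hc1, hc2, hc3⟩ := exists_dig_bound x
  obtain ⟨d, hd1, hd2, hd3⟩ := exists_dig_bound y
  refine ⟨min c d, by omega, fun n hn => ?_⟩
  rw [hc3 n (by omega), hd3 n (by omega)]

lemma kbar_set_bdd (x y : V q) :
    BddAbove {ℓ : ℤ | ℓ ≤ min x.2 y.2 ∧ ∀ n ≤ ℓ, dig x n = dig y n} :=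
  ⟨min x.2 y.2, fun _ hℓ => hℓ.1⟩

lemma kbar_mem (x y : V q) :
    kbar x y ≤ min x.2 y.2 ∧ ∀ n ≤ kbar x y, dig x n = dig y n := by
  have := Int.csSup_mem (s := {ℓ : ℤ | ℓ ≤ min x.2 y.2 ∧ ∀ n ≤ ℓ, dig x n = dig y n})
    (kbar_set_nonempty x y) (kbar_set_bdd x y)
  unfold kbar
  rw [kbar_set_eq x y]
  exact this

lemma kbar_le_min (x y : V q) : kbar x y ≤ min x.2 y.2 := (kbar_mem x y).1

lemma kbar_agree (x y : V q) : ∀ n ≤ kbar x y, dig x n = dig y n := (kbar_mem x y).2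

lemma le_kbar {x y : V q} {ℓ : ℤ} (h1 : ℓ ≤ min x.2 y.2)
    (h2 : ∀ n ≤ ℓ, dig x n = dig y n) : ℓ ≤ kbar x y := by
  unfold kbar
  rw [kbar_set_eq x y]
  exact le_csSup (kbar_set_bdd x y) ⟨h1, h2⟩

lemma kbar_lt_of_ne {x y : V q} {m : ℤ} (h : dig x m ≠ dig y m) : kbar x y < m := by
  by_contra hle
  exact h (kbar_agree x y m (by omega))

lemma kbar_succ_ne {x y : V q} (h : kbar x y < min x.2 y.2) :
    dig x (kbar x y + 1) ≠ dig y (kbar x y + 1) := by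
  intro heq
  have : kbar x y + 1 ≤ kbar x y := le_kbar (by omega) (fun n hn => by
    rcases eq_or_lt_of_le hn with hh | hh
    · exact hh ▸ heq
    · exact kbar_agree x y n (by omega))
  omega

lemma kbar_eq_of {x y : V q} {ℓ : ℤ} (h1 : ℓ ≤ min x.2 y.2)
    (h2 : ∀ n ≤ ℓ, dig x n = dig y n)
    (h3 : ℓ = min x.2 y.2 ∨ dig x (ℓ + 1) ≠ dig y (ℓ + 1)) : kbar x y = ℓ := by
  refine le_antisymm ?_ (le_kbar h1 h2)
  rcases h3 with h3 | h3
  · exact h3 ▸ kbar_le_min x y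
  · have := kbar_lt_of_ne h3
    omega

/-- `up(o, y) = -kbar(o, y)`. -/
lemma up_troot (z : V q) : up (troot q) z = -kbar (troot q) z := by
  unfold up troot
  simp

/-- Far vertices: when `kbar(o,y)` is low, `kbar(x,y) = kbar(o,y)`. -/
lemma kbar_far {x y : V q} {c : ℤ} (hc1 : c ≤ x.2) (hc2 : c ≤ 0)
    (hc3 : ∀ n ≤ c, dig x n = 0) (hfar : kbar (troot q) y < c) :
    kbar x y = kbar (troot q) y := by
  set ℓ := kbar (troot q) y with hℓ
  have hmin := kbar_le_min (troot q) y
  have hagree := kbar_agree (troot q) y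
  have htr2 : (troot q).2 = 0 := rfl
  rw [htr2] at hmin
  have hmin1 : ℓ ≤ 0 := le_trans hmin (min_le_left _ _)
  have hmin2 : ℓ ≤ y.2 := le_trans hmin (min_le_right _ _)
  refine kbar_eq_of (by omega) (fun n hn => ?_) ?_
  · rw [hc3 n (by omega), ← dig_troot (q := q) n]
    exact hagree n hn
  · by_cases hml : ℓ = min x.2 y.2
    · exact Or.inl hml
    · right
      have hlty : ℓ < y.2 := by
        rcases lt_or_eq_of_le hmin2 with hh | hh
        · exact hh
        · exfalso; apply hml; omega
      rw [hc3 (ℓ+1) (by omega)]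
      have : dig (troot q) (ℓ+1) ≠ dig y (ℓ+1) := by
        apply kbar_succ_ne
        rw [htr2]
        omega
      rw [dig_troot] at this
      exact this

end Tree
section Trans
variable {q : ℕ}

lemma support_finite_aux {g : ℕ → ZMod q} {B : ℤ}
    (hg : ∀ j : ℕ, g j ≠ 0 → (j : ℤ) < B) : (Function.support g).Finite := by
  apply Set.Finite.subset (Set.finite_Iio B.toNat)
  intro j hj
  have := hg j hj
  simp only [Set.mem_Iio]
  omega

/-- Translation carrying `x` to the root. -/
noncomputable def transConf (x z : V q) : Conf q :=
  ⟨fun j => z.1.1 j - dig x (z.2 - j), by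
    obtain ⟨N, hN⟩ := (z.1.2).bddAbove
    obtain ⟨c, hc1, hc2, hc3⟩ := exists_dig_bound x
    apply support_finite_aux (B := max ((N:ℤ) + 1) (z.2 - c))
    intro j hj
    change z.1.1 j - dig x (z.2 - (j:ℤ)) ≠ 0 at hj
    by_contra hB
    push_neg at hB
    have h1 : z.1.1 j = 0 := by
      by_contra hz
      have := hN (Function.mem_support.mpr hz)
      have this : j ≤ N := this
      omega
    have h2 : dig x (z.2 - j) = 0 := hc3 _ (by omega)
    rw [h1, h2, sub_zero] at hj
    exact hj rfl⟩

noncomputable def transV (x z : V q) : V q := (transConf x z, z.2 - x.2)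

lemma transV_snd (x z : V q) : (transV x z).2 = z.2 - x.2 := rfl

lemma dig_transV (x z : V q) {n : ℤ} (hn : n ≤ z.2 - x.2) :
    dig (transV x z) n = dig z (n + x.2) - dig x (n + x.2) := by
  unfold dig
  rw [show (transV x z).2 = z.2 - x.2 from rfl, if_pos hn]
  show z.1.1 ((z.2 - x.2 - n).toNat) - dig x (z.2 - ((z.2 - x.2 - n).toNat : ℤ)) = _
  have e1 : z.1.1 ((z.2 - x.2 - n).toNat) = dig z (n + x.2) := by
    have e : n + x.2 = z.2 - ((z.2 - x.2 - n).toNat : ℤ) := by omega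
    rw [e, dig_apply]
  have e2 : z.2 - ((z.2 - x.2 - n).toNat : ℤ) = n + x.2 := by omega
  rw [e1, e2]
  rfl

noncomputable def transVinv (x z : V q) : V q :=
  (⟨fun j => z.1.1 j + dig x (z.2 + x.2 - j), by
    obtain ⟨N, hN⟩ := (z.1.2).bddAbove
    obtain ⟨c, hc1, hc2, hc3⟩ := exists_dig_bound x
    apply support_finite_aux (B := max ((N:ℤ) + 1) (z.2 + x.2 - c))
    intro j hj
    change z.1.1 j + dig x (z.2 + x.2 - (j:ℤ)) ≠ 0 at hj
    by_contra hB
    push_neg at hB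
    have h1 : z.1.1 j = 0 := by
      by_contra hz
      have := hN (Function.mem_support.mpr hz)
      have this : j ≤ N := this
      omega
    have h2 : dig x (z.2 + x.2 - j) = 0 := hc3 _ (by omega)
    rw [h1, h2, add_zero] at hj
    exact hj rfl⟩, z.2 + x.2)

/-- Translation as an equivalence of `V q`. -/
noncomputable def transEquiv (x : V q) : V q ≃ V q where
  toFun := transV x
  invFun := transVinv x
  left_inv := by
    intro z
    unfold transVinv transV
    refine Prod.ext (Subtype.ext (funext fun j => ?_)) (by simp)
    show (transConf x z).1 j + dig x ((z.2 - x.2) + x.2 - j) = z.1.1 j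
    unfold transConf
    simp only
    have : z.2 - x.2 + x.2 - (j:ℤ) = z.2 - j := by ring
    rw [this]
    ring
  right_inv := by
    intro z
    unfold transVinv transV
    refine Prod.ext (Subtype.ext (funext fun j => ?_)) (by simp)
    show z.1.1 j + dig x (z.2 + x.2 - j) - dig x (z.2 + x.2 - j) = z.1.1 j
    ring

lemma transEquiv_apply (x z : V q) : transEquiv x z = transV x z := rfl

lemma kbar_transV (x a b : V q) :
    kbar (transV x a) (transV x b) = kbar a b - x.2 := by
  have hmin := kbar_le_min a b
  set ℓ := kbar a b with hℓ
  refine kbar_eq_of ?_ (fun n hn => ?_) ?_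
  · rw [transV_snd, transV_snd]
    omega
  · rw [dig_transV x a (by omega), dig_transV x b (by omega)]
    rw [kbar_agree a b (n + x.2) (by omega)]
  · rcases eq_or_lt_of_le hmin with hh | hh
    · left; rw [transV_snd, transV_snd]; omega
    · right
      have hne := kbar_succ_ne hh
      rw [dig_transV x a (by omega), dig_transV x b (by omega)]
      intro hcon
      apply hne
      have : ℓ - x.2 + 1 + x.2 = ℓ + 1 := by ring
      rw [this] at hcon
      have := sub_left_injective.eq_iff.mp hcon
      exact this
  
lemma up_transV (x a b : V q) : up (transV x a) (transV x b) = up a b := by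
  unfold up
  rw [kbar_transV, transV_snd]
  ring

lemma transV_self (x : V q) : transV x x = troot q := by
  apply vertex_ext
  · show x.2 - x.2 = (0:ℤ); ring
  · intro n
    rw [dig_troot]
    by_cases hn : n ≤ x.2 - x.2
    · rw [dig_transV x x hn]
      ring_nf
    · exact dig_of_gt (by rw [transV_snd]; omega)

end Trans
section Rot
variable {q : ℕ}

lemma forall_lt_succ {Q : ℤ → Prop} {n : ℤ} :
    (∀ m < n + 1, Q m) ↔ (∀ m < n, Q m) ∧ Q n := by
  constructor
  · exact fun H => ⟨fun m hm => H m (by omega), H n (by omega)⟩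
  · rintro ⟨H, hQ⟩ m hm
    rcases lt_or_eq_of_le (by omega : m ≤ n) with hh | hh
    · exact H m hh
    · exact hh ▸ hQ

open Classical in
/-- Digit transformation of the rotation carrying `w` to `w'` and fixing the root. -/
noncomputable def rotDig (w w' z : V q) (n : ℤ) : ZMod q :=
  if ∀ m < n, dig z m = dig w m then
    (if n = kbar (troot q) w + 1 then
      Equiv.swap (dig w (kbar (troot q) w + 1)) (dig w' (kbar (troot q) w + 1)) (dig z n)
    else dig z n + dig w' n - dig w n)
  else dig z n

lemma rotDig_low {w w' z : V q} {n : ℤ} (hn : n ≤ kbar (troot q) w)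
    (hn' : n ≤ kbar (troot q) w') : rotDig w w' z n = dig z n := by
  have hw : dig w n = 0 := by
    rw [← kbar_agree (troot q) w n hn, dig_troot]
  have hw' : dig w' n = 0 := by
    rw [← kbar_agree (troot q) w' n hn', dig_troot]
  unfold rotDig
  split
  · rw [if_neg (by omega), hw, hw']
    ring
  · rfl

/-- If two vertices have equal digits below `n`, the rotated digits at `n` agree iff
the original ones do. -/
lemma rotDig_inj {w w' z z₂ : V q} {n : ℤ} (hag : ∀ m < n, dig z m = dig z₂ m) :
    (rotDig w w' z n = rotDig w w' z₂ n ↔ dig z n = dig z₂ n) := by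
  unfold rotDig
  have hbr : (∀ m < n, dig z m = dig w m) ↔ (∀ m < n, dig z₂ m = dig w m) := by
    constructor <;> intro H m hm
    · rw [← hag m hm]; exact H m hm
    · rw [hag m hm]; exact H m hm
  by_cases hb : ∀ m < n, dig z m = dig w m
  · rw [if_pos hb, if_pos (hbr.mp hb)]
    by_cases hn : n = kbar (troot q) w + 1
    · rw [if_pos hn, if_pos hn]
      exact (Equiv.injective _).eq_iff
    · rw [if_neg hn, if_neg hn]
      constructor
      · intro hh
        have := sub_left_injective.eq_iff.mp hh
        exact add_right_cancel this
      · intro hh; rw [hh]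
  · rw [if_neg hb, if_neg (fun hh => hb (hbr.mpr hh))]

/-- Pair agreement transfer (Claim 2). -/
lemma rotDig_agree_iff (w w' z z₂ : V q) (n : ℤ) :
    (∀ m < n, rotDig w w' z m = rotDig w w' z₂ m) ↔ (∀ m < n, dig z m = dig z₂ m) := by
  rcases le_or_gt n (min (kbar (troot q) w) (kbar (troot q) w') + 1) with h | h
  · constructor <;> intro H m hm
    · have := H m hm
      rwa [rotDig_low (by omega) (by omega), rotDig_low (by omega) (by omega)] at this
    · rw [rotDig_low (by omega) (by omega), rotDig_low (by omega) (by omega)]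
      exact H m hm
  · set K := min (kbar (troot q) w) (kbar (troot q) w') + 1 with hK
    have base : (∀ m < K, rotDig w w' z m = rotDig w w' z₂ m) ↔ (∀ m < K, dig z m = dig z₂ m) := by
      constructor <;> intro H m hm
      · have := H m hm
        rwa [rotDig_low (by omega) (by omega), rotDig_low (by omega) (by omega)] at this
      · rw [rotDig_low (by omega) (by omega), rotDig_low (by omega) (by omega)]
        exact H m hm
    have ind : ∀ n', K ≤ n' →
        ((∀ m < n', rotDig w w' z m = rotDig w w' z₂ m) ↔ (∀ m < n', dig z m = dig z₂ m)) := by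
      intro n' hn'
      refine Int.le_induction (motive := fun t _ => (∀ m < t, rotDig w w' z m = rotDig w w' z₂ m) ↔ (∀ m < t, dig z m = dig z₂ m)) base ?_ n' hn'
      intro n'' _ IH
      rw [forall_lt_succ, forall_lt_succ]
      constructor
      · rintro ⟨H1, H2⟩
        have hr := IH.mp H1
        exact ⟨hr, (rotDig_inj hr).mp H2⟩
      · rintro ⟨H1, H2⟩
        have hr := IH.mpr H1
        exact ⟨hr, (rotDig_inj H1).mpr H2⟩
    exact ind n (by omega)

/-- Transfer of agreement with `w` (Claim 1). -/
lemma rotDig_w_agree_iff (w w' z : V q)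
    (hkb : kbar (troot q) w = kbar (troot q) w') (n : ℤ) :
    (∀ m < n, rotDig w w' z m = dig w' m) ↔ (∀ m < n, dig z m = dig w m) := by
  set K := kbar (troot q) w + 1 with hKdef
  have hlow : ∀ m : ℤ, m < K → (rotDig w w' z m = dig w' m ↔ dig z m = dig w m) := by
    intro m hm
    have h1 : dig w m = 0 := by rw [← kbar_agree (troot q) w m (by omega), dig_troot]
    have h2 : dig w' m = 0 := by rw [← kbar_agree (troot q) w' m (by omega), dig_troot]
    rw [rotDig_low (by omega) (by omega), h1, h2]
  rcases le_or_gt n K with h | h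
  · constructor <;> intro H m hm
    · exact (hlow m (by omega)).mp (H m hm)
    · exact (hlow m (by omega)).mpr (H m hm)
  · have base : (∀ m < K, rotDig w w' z m = dig w' m) ↔ (∀ m < K, dig z m = dig w m) := by
      constructor <;> intro H m hm
      · exact (hlow m hm).mp (H m hm)
      · exact (hlow m hm).mpr (H m hm)
    have ind : ∀ n', K ≤ n' →
        ((∀ m < n', rotDig w w' z m = dig w' m) ↔ (∀ m < n', dig z m = dig w m)) := by
      intro n' hn'
      refine Int.le_induction (motive := fun t _ => (∀ m < t, rotDig w w' z m = dig w' m) ↔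
        (∀ m < t, dig z m = dig w m)) base ?_ n' hn'
      intro t ht IH
      rw [forall_lt_succ, forall_lt_succ]
      constructor
      · rintro ⟨H1, H2⟩
        refine ⟨IH.mp H1, ?_⟩
        have hb : ∀ m < t, dig z m = dig w m := IH.mp H1
        unfold rotDig at H2
        rw [if_pos hb] at H2
        by_cases hkt : t = kbar (troot q) w + 1
        · rw [if_pos hkt] at H2
          have hsw : Equiv.swap (dig w (kbar (troot q) w + 1)) (dig w' (kbar (troot q) w + 1))
              (dig w (kbar (troot q) w + 1)) = dig w' (kbar (troot q) w + 1) :=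
            Equiv.swap_apply_left _ _
          rw [hkt] at H2 ⊢
          have h3 := H2.trans hsw.symm
          exact (Equiv.injective _).eq_iff.mp h3
        · rw [if_neg hkt] at H2
          have : dig z t + dig w' t - dig w t = dig w t + dig w' t - dig w t ↔
              dig z t = dig w t := by
            constructor
            · intro hh
              have := sub_left_injective.eq_iff.mp hh
              exact add_right_cancel this
            · intro hh; rw [hh]
          apply this.mp
          rw [H2]; ring
      · rintro ⟨H1, H2⟩
        refine ⟨IH.mpr H1, ?_⟩
        unfold rotDig
        rw [if_pos H1]
        by_cases hkt : t = kbar (troot q) w + 1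
        · rw [if_pos hkt]
          rw [hkt] at H2 ⊢
          rw [H2]
          exact Equiv.swap_apply_left _ _
        · rw [if_neg hkt, H2]
          ring
    exact ind n (by omega)

lemma rotDig_self (w w' : V q) (hkb : kbar (troot q) w = kbar (troot q) w') (n : ℤ) :
    rotDig w w' w n = dig w' n := by
  unfold rotDig
  rw [if_pos (fun m _ => rfl)]
  by_cases hkt : n = kbar (troot q) w + 1
  · rw [if_pos hkt, hkt]
    exact Equiv.swap_apply_left _ _
  · rw [if_neg hkt]; ring

/-- The rotation fixes the root digit-wise. -/
lemma rotDig_troot (w w' : V q) (hkb : kbar (troot q) w = kbar (troot q) w')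
    (hk0 : kbar (troot q) w < 0) (hkK : kbar (troot q) w < w.2)
    (hkK' : kbar (troot q) w < w'.2) (n : ℤ) :
    rotDig w w' (troot q) n = 0 := by
  have ha : dig w (kbar (troot q) w + 1) ≠ 0 := by
    have := kbar_succ_ne (x := troot q) (y := w) (by
      rw [show (troot q).2 = 0 from rfl]; omega)
    rw [dig_troot] at this
    exact fun hh => this hh.symm
  have ha' : dig w' (kbar (troot q) w + 1) ≠ 0 := by
    have := kbar_succ_ne (x := troot q) (y := w') (by
      rw [show (troot q).2 = 0 from rfl]; omega)
    rw [dig_troot, ← hkb] at this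
    exact fun hh => this hh.symm
  unfold rotDig
  by_cases hb : ∀ m < n, dig (troot q) m = dig w m
  · rw [if_pos hb]
    by_cases hkt : n = kbar (troot q) w + 1
    · rw [if_pos hkt, hkt, dig_troot]
      exact Equiv.swap_apply_of_ne_of_ne (fun hh => ha hh.symm) (fun hh => ha' hh.symm)
    · rw [if_neg hkt]
      have hn : n ≤ kbar (troot q) w := by
        by_contra hlt
        have := hb (kbar (troot q) w + 1) (by omega)
        rw [dig_troot] at this
        exact ha this.symm
      rw [dig_troot, ← kbar_agree (troot q) w n hn, ← kbar_agree (troot q) w' n (by omega),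
        dig_troot]
      ring
  · rw [if_neg hb, dig_troot]

/-- The rotation on vertices. -/
noncomputable def rotV (w w' : V q) (z : V q) : V q :=
  (⟨fun j => rotDig w w' z (z.2 - j), by
    obtain ⟨c, hc1, hc2, hc3⟩ := exists_dig_bound z
    obtain ⟨cw, hw1, hw2, hw3⟩ := exists_dig_bound w
    obtain ⟨cw', hw1', hw2', hw3'⟩ := exists_dig_bound w'
    apply support_finite_aux
      (B := max (z.2 - min (min c cw) cw' + 1) (z.2 - (kbar (troot q) w + 1) + 1))
    intro j hj
    by_contra hB
    push_neg at hB
    apply hj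
    have hn1 : z.2 - (j:ℤ) ≤ min (min c cw) cw' := by omega
    have hn2 : z.2 - (j:ℤ) ≠ kbar (troot q) w + 1 := by omega
    unfold rotDig
    rw [if_neg hn2, hc3 _ (by omega), hw3 _ (by omega), hw3' _ (by omega)]
    split <;> ring⟩, z.2)

lemma rotV_snd (w w' z : V q) : (rotV w w' z).2 = z.2 := rfl

lemma dig_rotV (w w' z : V q) {n : ℤ} (hn : n ≤ z.2) :
    dig (rotV w w' z) n = rotDig w w' z n := by
  unfold dig
  rw [show (rotV w w' z).2 = z.2 from rfl, if_pos hn]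
  show rotDig w w' z (z.2 - ((z.2 - n).toNat : ℤ)) = _
  congr 1
  omega

lemma rotV_w (w w' : V q) (hww : w.2 = w'.2)
    (hkb : kbar (troot q) w = kbar (troot q) w') : rotV w w' w = w' := by
  apply vertex_ext
  · rw [rotV_snd]; exact hww
  · intro n
    by_cases hn : n ≤ w.2
    · rw [dig_rotV w w' w hn, rotDig_self w w' hkb]
    · rw [dig_of_gt (by rw [rotV_snd]; omega), dig_of_gt (by omega)]

lemma rotV_troot (w w' : V q) (hkb : kbar (troot q) w = kbar (troot q) w')
    (hk0 : kbar (troot q) w < 0) (hkK : kbar (troot q) w < w.2)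
    (hkK' : kbar (troot q) w < w'.2) : rotV w w' (troot q) = troot q := by
  apply vertex_ext
  · rfl
  · intro n
    rw [dig_troot]
    by_cases hn : n ≤ (troot q).2
    · rw [dig_rotV w w' (troot q) hn, rotDig_troot w w' hkb hk0 hkK hkK']
    · exact dig_of_gt (by rw [rotV_snd]; omega)

/-- `rotV w' w` undoes `rotV w w'`. -/
lemma rotV_inv (w w' : V q) (hww : w.2 = w'.2)
    (hkb : kbar (troot q) w = kbar (troot q) w') (z : V q) :
    rotV w' w (rotV w w' z) = z := by
  apply vertex_ext
  · rfl
  · intro n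
    by_cases hn : n ≤ z.2
    swap
    · rw [dig_of_gt (by rw [rotV_snd, rotV_snd]; omega), dig_of_gt (by omega)]
    rw [dig_rotV w' w _ (by rw [rotV_snd]; exact hn)]
    have hbr : (∀ m < n, dig (rotV w w' z) m = dig w' m) ↔ (∀ m < n, dig z m = dig w m) := by
      constructor <;> intro H m hm
      · have := H m hm
        rw [dig_rotV w w' z (by omega)] at this
        exact (rotDig_w_agree_iff w w' z hkb n).mp
          (fun m' hm' => by rw [← dig_rotV w w' z (by omega)]; exact H m' hm') m hm
      · rw [dig_rotV w w' z (by omega)]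
        exact (rotDig_w_agree_iff w w' z hkb n).mpr
          (fun m' hm' => H m' hm') m hm
    unfold rotDig
    by_cases hb : ∀ m < n, dig (rotV w w' z) m = dig w' m
    · rw [if_pos hb]
      have hzw : ∀ m < n, dig z m = dig w m := hbr.mp hb
      have hrot : dig (rotV w w' z) n = rotDig w w' z n := dig_rotV w w' z hn
      by_cases hkt : n = kbar (troot q) w' + 1
      · rw [if_pos hkt]
        have hkt2 : n = kbar (troot q) w + 1 := by omega
        rw [hrot]
        unfold rotDig
        rw [if_pos hzw, if_pos hkt2]
        rw [hkt2, ← hkb] at hkt ⊢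
        rw [Equiv.swap_comm]
        exact Equiv.swap_apply_self _ _ _
      · rw [if_neg hkt]
        have hkt2 : ¬ n = kbar (troot q) w + 1 := by omega
        rw [hrot]
        unfold rotDig
        rw [if_pos hzw, if_neg hkt2]
        ring
    · rw [if_neg hb, dig_rotV w w' z hn]
      unfold rotDig
      rw [if_neg (fun hh => hb (hbr.mpr hh))]

/-- The rotation as an equivalence of `V q`. -/
noncomputable def rotEquiv (w w' : V q) (hww : w.2 = w'.2)
    (hkb : kbar (troot q) w = kbar (troot q) w') : V q ≃ V q where
  toFun := rotV w w'
  invFun := rotV w' w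
  left_inv := rotV_inv w w' hww hkb
  right_inv := rotV_inv w' w hww.symm hkb.symm

lemma kbar_rotV (w w' : V q) (z z₂ : V q) :
    kbar (rotV w w' z) (rotV w w' z₂) = kbar z z₂ := by
  have hmin := kbar_le_min z z₂
  set ℓ := kbar z z₂ with hℓ
  refine kbar_eq_of ?_ (fun n hn => ?_) ?_
  · rw [rotV_snd, rotV_snd]; exact hmin
  · rw [dig_rotV w w' z (by omega), dig_rotV w w' z₂ (by omega)]
    exact (rotDig_agree_iff w w' z z₂ (ℓ + 1)).mpr
      (fun m hm => kbar_agree z z₂ m (by omega)) n (by omega)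
  · rcases eq_or_lt_of_le hmin with hh | hh
    · left; rw [rotV_snd, rotV_snd]; exact hh
    · right
      have hne := kbar_succ_ne hh
      rw [dig_rotV w w' z (by omega), dig_rotV w w' z₂ (by omega)]
      intro hcon
      exact hne ((rotDig_inj (fun m hm => kbar_agree z z₂ m (by omega))).mp hcon)

lemma up_rotV (w w' : V q) (z z₂ : V q) :
    up (rotV w w' z) (rotV w w' z₂) = up z z₂ := by
  unfold up
  rw [kbar_rotV, rotV_snd]

end Rot
section Main
variable {q : ℕ} {p : V q → V q → ℝ}

lemma p_inv_transV (hsi : SemiIsoTree p) (x a b : V q) :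
    p (transV x a) (transV x b) = p a b :=
  hsi _ _ a b (up_transV x a b) (up_transV x b a)

lemma p_inv_rotV (hsi : SemiIsoTree p) (w w' a b : V q) :
    p (rotV w w' a) (rotV w w' b) = p a b :=
  hsi _ _ a b (up_rotV w w' a b) (up_rotV w w' b a)

lemma green_transV (hsi : SemiIsoTree p) (x a b : V q) :
    Green p (transV x a) (transV x b) = Green p a b :=
  green_inv (transEquiv x) (fun a b => p_inv_transV hsi x a b) a b

lemma green_rotV (hsi : SemiIsoTree p) (w w' : V q) (hww : w.2 = w'.2)
    (hkb : kbar (troot q) w = kbar (troot q) w') (a b : V q) :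
    Green p (rotV w w' a) (rotV w w' b) = Green p a b :=
  green_inv (rotEquiv w w' hww hkb) (fun a b => p_inv_rotV hsi w w' a b) a b

/-- Green kernels from two vertices on the same horocycle agree for targets far
towards `ω`. -/
lemma green_eq_far (hsi : SemiIsoTree p) (x x' z : V q) (hxx : x.2 = x'.2)
    (hk1 : kbar x z = kbar (troot q) z) (hk2 : kbar x' z = kbar (troot q) z)
    (hk3 : kbar (troot q) z < x.2) :
    Green p x z = Green p x' z := by
  set w := transV x z with hw
  set w' := transV x' z with hw'
  have gw : Green p x z = Green p (troot q) w := by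
    rw [← transV_self x, hw, green_transV hsi]
  have gw' : Green p x' z = Green p (troot q) w' := by
    rw [← transV_self x', hw', green_transV hsi]
  have hworoot : kbar (troot q) w = kbar (troot q) z - x.2 := by
    rw [hw, ← transV_self x, kbar_transV, hk1, transV_self]
  have hworoot' : kbar (troot q) w' = kbar (troot q) z - x.2 := by
    rw [hw', ← transV_self x', kbar_transV, hk2, transV_self, ← hxx]
  have hww : w.2 = w'.2 := by
    rw [hw, hw', transV_snd, transV_snd, hxx]
  have hkb : kbar (troot q) w = kbar (troot q) w' := by rw [hworoot, hworoot']
  have hk0 : kbar (troot q) w < 0 := by omega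
  have hwmin : kbar (troot q) w ≤ w.2 := by
    have := kbar_le_min (troot q) w
    omega
  rcases eq_or_lt_of_le hwmin with hcase | hcase
  · -- w and w' both lie on the root ray: they are equal
    have : w = w' := by
      apply vertex_ext hww
      intro n
      by_cases hn : n ≤ w.2
      · rw [← kbar_agree (troot q) w n (by omega), ← kbar_agree (troot q) w' n (by omega)]
      · rw [dig_of_gt (by omega), dig_of_gt (by omega : w'.2 < n)]
    rw [gw, gw', this]
  · have hkK' : kbar (troot q) w < w'.2 := by omega
    have : Green p (troot q) w = Green p (troot q) w' := by
      have h1 := green_rotV hsi w w' hww hkb (troot q) w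
      rw [rotV_troot w w' hkb hk0 hcase hkK', rotV_w w w' hww hkb] at h1
      exact h1.symm
    rw [gw, gw', this]

end Main

/-- If the Martin kernels of an irreducible, transient,
semi-isotropic walk on `T_q` converge pointwise to `h` along a sequence tending
to the distinguished end `ω`, then `h(x) = f(hor(x))` for a nonnegative function
`f` on `ℤ` which is superharmonic for the projected walk. -/
theorem martin_limit_at_omega (q : ℕ) (hq : 2 ≤ q)
    (p : V q → V q → ℝ) (hp : IsTransMat p)
    (hirr : IsIrredMat p) (htrans : IsTransient p) (hsi : SemiIsoTree p)
    (y : ℕ → V q) (hy : TendsToOmega y) (h : V q → ℝ)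
    (hlim : ∀ x : V q,
      Tendsto (fun n => Martin p (troot q) x (y n)) atTop (nhds (h x))) :
    ∃ f : ℤ → ℝ, (∀ m, 0 ≤ f m) ∧ (∀ x : V q, h x = f (hor x)) ∧
      ∀ m : ℤ, ∃ s : ℝ,
        HasSum (fun n : ℤ => muTilde p n * f (m + n)) s ∧ s ≤ f m := by
  classical
  have hh0 : ∀ x, 0 ≤ h x := by
    intro x
    refine ge_of_tendsto' (hlim x) (fun j => ?_)
    exact div_nonneg ENNReal.toReal_nonneg ENNReal.toReal_nonneg
  have hkbar_to : ∀ C : ℤ, ∀ᶠ j in atTop, kbar (troot q) (y j) < C := by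
    intro C
    have hev := hy.eventually_ge_atTop (1 - C)
    filter_upwards [hev] with j hj
    rw [up_troot] at hj
    omega
  have key : ∀ x x' : V q, x.2 = x'.2 → h x = h x' := by
    intro x x' hxx
    obtain ⟨c, hc1, hc2, hc3⟩ := exists_dig_bound x
    obtain ⟨c', hc1', hc2', hc3'⟩ := exists_dig_bound x'
    have hev : (fun j => Martin p (troot q) x (y j))
        =ᶠ[atTop] (fun j => Martin p (troot q) x' (y j)) := by
      filter_upwards [hkbar_to (min c c')] with j hj
      have k1 : kbar x (y j) = kbar (troot q) (y j) := kbar_far hc1 hc2 hc3 (by omega)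
      have k2 : kbar x' (y j) = kbar (troot q) (y j) := kbar_far hc1' hc2' hc3' (by omega)
      have hG := green_eq_far hsi x x' (y j) hxx k1 k2 (by omega)
      unfold Martin
      rw [hG]
    exact tendsto_nhds_unique (hlim x) (Filter.Tendsto.congr' hev.symm (hlim x'))
  refine ⟨fun m => h (zeroConf q, m), fun m => hh0 _, fun x => key x (zeroConf q, x.2) rfl, ?_⟩
  intro m
  set x : V q := (zeroConf q, m) with hxdef
  have hxm : x.2 = m := rfl
  -- positivity of the Martin denominator
  have dpos : ∀ j, 0 < (Green p (troot q) (y j)).toReal := by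
    intro j
    obtain ⟨n0, hn0⟩ := hirr (troot q) (y j)
    have hge : ENNReal.ofReal (pstep p n0 (troot q) (y j)) ≤ Green p (troot q) (y j) :=
      ENNReal.le_tsum n0
    have hpos : 0 < Green p (troot q) (y j) :=
      lt_of_lt_of_le (ENNReal.ofReal_pos.mpr hn0) hge
    exact ENNReal.toReal_pos hpos.ne' (htrans _ _)
  -- finite partial sums of the superharmonic inequality, at finite time
  have hFinsum : ∀ (F : Finset (V q)) (j : ℕ),
      ∑ z ∈ F, p x z * Martin p (troot q) z (y j) ≤ Martin p (troot q) x (y j) := by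
    intro F j
    have hEN : ∑ z ∈ F, ENNReal.ofReal (p x z) * Green p z (y j) ≤ Green p x (y j) := by
      calc ∑ z ∈ F, ENNReal.ofReal (p x z) * Green p z (y j)
          ≤ ∑' z, ENNReal.ofReal (p x z) * Green p z (y j) := ENNReal.sum_le_tsum F
        _ ≤ Green p x (y j) := by
            rw [green_identity hp x (y j)]
            exact le_add_self
    have hfin : ∀ z ∈ F, ENNReal.ofReal (p x z) * Green p z (y j) ≠ ⊤ :=
      fun z _ => ENNReal.mul_ne_top ENNReal.ofReal_ne_top (htrans _ _)
    have hR : ∑ z ∈ F, p x z * (Green p z (y j)).toReal ≤ (Green p x (y j)).toReal := by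
      have h1 := ENNReal.toReal_mono (htrans _ _) hEN
      rw [ENNReal.toReal_sum hfin] at h1
      have h2 : ∑ z ∈ F, (ENNReal.ofReal (p x z) * Green p z (y j)).toReal
          = ∑ z ∈ F, p x z * (Green p z (y j)).toReal :=
        Finset.sum_congr rfl fun z _ => by
          rw [ENNReal.toReal_mul, ENNReal.toReal_ofReal (hp.1 x z)]
      rwa [h2] at h1
    unfold Martin
    rw [show ∑ z ∈ F, p x z * ((Green p z (y j)).toReal / (Green p (troot q) (y j)).toReal)
        = (∑ z ∈ F, p x z * (Green p z (y j)).toReal) / (Green p (troot q) (y j)).toReal by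
      rw [Finset.sum_div]
      exact Finset.sum_congr rfl fun z _ => (mul_div_assoc _ _ _).symm]
    exact div_le_div_of_nonneg_right hR (dpos j).le
  -- pass to the limit
  have hFh : ∀ F : Finset (V q), ∑ z ∈ F, p x z * h z ≤ h x := by
    intro F
    have t1 : Tendsto (fun j => ∑ z ∈ F, p x z * Martin p (troot q) z (y j)) atTop
        (nhds (∑ z ∈ F, p x z * h z)) :=
      tendsto_finset_sum F (fun z _ => (hlim z).const_mul (p x z))
    exact le_of_tendsto_of_tendsto t1 (hlim x) (Filter.Eventually.of_forall (hFinsum F))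
  have hgnn : ∀ z, 0 ≤ p x z * h z := fun z => mul_nonneg (hp.1 x z) (hh0 z)
  have hsumm : Summable (fun z => p x z * h z) := summable_of_sum_le hgnn hFh
  set S : ℝ := ∑' z, p x z * h z with hSdef
  have hS : HasSum (fun z => p x z * h z) S := hsumm.hasSum
  have hSle : S ≤ h x := Summable.tsum_le_of_sum_le hsumm hFh
  -- regroup along horocycles
  have hfib : ∀ n : ℤ, HasSum (fun zc : {z : V q // hor z = n} => p x zc.1 * h zc.1)
      ((∑' zc : {z : V q // hor z = n}, p x zc.1) * h (zeroConf q, n)) := by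
    intro n
    have hs1 : Summable (fun zc : {z : V q // hor z = n} => p x zc.1) :=
      (hp.2 x).summable.subtype _
    have h2 := hs1.hasSum.mul_right (h (zeroConf q, n))
    refine h2.congr_fun ?_
    intro zc
    rw [key zc.1 (zeroConf q, n) zc.2]
  have hSig := (Equiv.sigmaFiberEquiv (hor : V q → ℤ)).hasSum_iff.mpr hS
  have hG' : HasSum (fun n : ℤ =>
      (∑' zc : {z : V q // hor z = n}, p x zc.1) * h (zeroConf q, n)) S :=
    HasSum.sigma hSig (fun n => hfib n)
  -- identify the fiber sums with muTilde
  have hmu : ∀ n : ℤ, (∑' zc : {z : V q // hor z = m + n}, p x zc.1) = muTilde p n := by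
    intro n
    have step1 : muTilde p n = ∑' yc : {z : V q // hor z = n}, p (troot q) yc.1 := by
      calc muTilde p n
          = ∑' z, Set.indicator {z : V q | hor z = n} (fun z => p (troot q) z) z := by
            unfold muTilde
            refine tsum_congr fun z => ?_
            by_cases hz : hor z = n
            · simp [Set.indicator, hz]
            · simp [Set.indicator, hz]
        _ = ∑' (yc : ↥{z : V q | hor z = n}), p (troot q) yc.1 := (tsum_subtype _ _).symm
        _ = ∑' yc : {z : V q // hor z = n}, p (troot q) yc.1 := rfl
    let fEquiv : {z : V q // hor z = m + n} ≃ {u : V q // hor u = n} :=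
      (transEquiv x).subtypeEquiv (fun z => by
        show z.2 = m + n ↔ (transV x z).2 = n
        rw [transV_snd, hxm]
        omega)
    have step2 : ∑' zc : {z : V q // hor z = m + n}, p (troot q) (fEquiv zc).1
        = ∑' uc : {u : V q // hor u = n}, p (troot q) uc.1 :=
      fEquiv.tsum_eq (fun uc => p (troot q) uc.1)
    have step3 : ∀ zc : {z : V q // hor z = m + n},
        p (troot q) (fEquiv zc).1 = p x zc.1 := by
      intro zc
      show p (troot q) (transV x zc.1) = p x zc.1
      rw [← transV_self x, p_inv_transV hsi]
    rw [step1, ← step2]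
    exact tsum_congr fun zc => (step3 zc).symm
  refine ⟨S, ?_, ?_⟩
  · have h3 := (Equiv.addLeft m).hasSum_iff.mpr hG'
    refine h3.congr_fun ?_
    intro n
    show muTilde p n * h (zeroConf q, m + n)
        = (∑' zc : {z : V q // hor z = (Equiv.addLeft m) n}, p x zc.1) * h (zeroConf q, _)
    rw [show ((Equiv.addLeft m) n : ℤ) = m + n from rfl, hmu n]
  · exact hSle
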